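/- arXiv:0912.3805 — 2 statements merged into one kernel-verified Lean document; each statement's English description precedes it below -/
import Mathlib

section
/- The purified distance is monotone under CPTP maps: for subnormalized states ρ, σ and a completely positive trace-preserving map E, P(E(ρ), E(σ)) ≤ P(ρ,σ). -/
open scoped Kronecker BigOperators ComplexOrder
open Matrix MeasureTheory

noncomputable section
open scoped Classical

namespace QIT

variable {n m : Type*} [Fintype n] [DecidableEq n] [Fintype m] [DecidableEq m]

/-- Total square root of a positive semidefinite matrix (junk value `0` otherwise). -/
def psdSqrt (M : Matrix n n ℂ) : Matrix n n ℂ :=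
  if h : M.PosSemidef then
    (h.1.eigenvectorUnitary : Matrix n n ℂ) *
      Matrix.diagonal ((↑) ∘ (√·) ∘ h.1.eigenvalues) *
      (star h.1.eigenvectorUnitary : Matrix n n ℂ)
  else 0

/-- Trace norm `‖M‖₁ = tr √(MᴴM)`. -/
def trNorm (M : Matrix n n ℂ) : ℝ :=
  ((psdSqrt (Mᴴ * M)).trace).re

/-- Fidelity `F(ρ,σ) = ‖√ρ √σ‖₁`. -/
def fidelity (ρ σ : Matrix n n ℂ) : ℝ := trNorm (psdSqrt ρ * psdSqrt σ)

/-- Generalized fidelity for subnormalized states. -/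
def genFid (ρ σ : Matrix n n ℂ) : ℝ :=
  fidelity ρ σ + Real.sqrt ((1 - ρ.trace.re) * (1 - σ.trace.re))

/-- Purified distance. -/
def purifiedDist (ρ σ : Matrix n n ℂ) : ℝ := Real.sqrt (1 - (genFid ρ σ) ^ 2)

/-- Subnormalized state. -/
def Subnormalized (ρ : Matrix n n ℂ) : Prop := ρ.PosSemidef ∧ ρ.trace.re ≤ 1

/-- Normalized state (density operator). -/
def IsDensity (ρ : Matrix n n ℂ) : Prop := ρ.PosSemidef ∧ ρ.trace = 1

/-- Max-relative entropy `D_max(ρ‖σ) = inf {λ | 2^λ σ ≥ ρ}`. -/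
def Dmax (ρ σ : Matrix n n ℂ) : ℝ :=
  sInf {l : ℝ | ((2 : ℝ) ^ l • σ - ρ).PosSemidef}

/-- Functional calculus for Hermitian matrices (junk value `0` otherwise). -/
def fcal (f : ℝ → ℝ) (M : Matrix n n ℂ) : Matrix n n ℂ :=
  if h : M.IsHermitian then
    (h.eigenvectorUnitary : Matrix n n ℂ) *
      Matrix.diagonal (fun i => (f (h.eigenvalues i) : ℂ)) *
      (star (h.eigenvectorUnitary : Matrix n n ℂ))
  else 0

/-- Projector onto the support of a Hermitian matrix. -/
def suppProj (M : Matrix n n ℂ) : Matrix n n ℂ :=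
  fcal (fun x => if x = 0 then 0 else 1) M

/-- Moore–Penrose style pseudo negative power `M^{-r}` of a Hermitian matrix. -/
def pinvPow (r : ℝ) (M : Matrix n n ℂ) : Matrix n n ℂ :=
  fcal (fun x => if x = 0 then 0 else x ^ (-r)) M

/-- `supp ρ ⊆ supp σ`, expressed via kernels. -/
def suppLE (ρ σ : Matrix n n ℂ) : Prop :=
  ∀ v : n → ℂ, σ.mulVec v = 0 → ρ.mulVec v = 0

/-- Operator norm of a matrix. -/
def opNorm (M : Matrix n n ℂ) : ℝ := ‖Matrix.toEuclideanCLM (𝕜 := ℂ) M‖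

/-- Matrix logarithm in base 2 (on the support). -/
def matLog2 (M : Matrix n n ℂ) : Matrix n n ℂ := fcal (Real.logb 2) M

/-- Quantum relative entropy (base 2). -/
def relEnt (ρ σ : Matrix n n ℂ) : ℝ :=
  ((ρ * matLog2 ρ).trace).re - ((ρ * matLog2 σ).trace).re

variable {a b : Type*} [Fintype a] [DecidableEq a] [Fintype b] [DecidableEq b]

/-- Partial trace over the second tensor factor. -/
def ptrB (M : Matrix (a × b) (a × b) ℂ) : Matrix a a ℂ :=
  Matrix.of fun i j => ∑ k : b, M (i, k) (j, k)

/-- Partial trace over the first tensor factor. -/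
def ptrA (M : Matrix (a × b) (a × b) ℂ) : Matrix b b ℂ :=
  Matrix.of fun i j => ∑ k : a, M (k, i) (k, j)

/-- Max-information `I_max(A:B)_ρ = min_{σ_B density} D_max(ρ_AB‖ρ_A⊗σ_B)`. -/
def Imax (ρ : Matrix (a × b) (a × b) ℂ) : ℝ :=
  sInf {x : ℝ | ∃ σ : Matrix b b ℂ, IsDensity σ ∧ x = Dmax ρ (ptrB ρ ⊗ₖ σ)}

/-- Conditional min-entropy `H_min(A|B)_ρ`. -/
def HminCond (ρ : Matrix (a × b) (a × b) ℂ) : ℝ :=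
  - sInf {x : ℝ | ∃ σ : Matrix b b ℂ, IsDensity σ ∧ x = Dmax ρ ((1 : Matrix a a ℂ) ⊗ₖ σ)}

/-- Smooth max-information. -/
def smoothImax (ε : ℝ) (ρ : Matrix (a × b) (a × b) ℂ) : ℝ :=
  sInf {x : ℝ | ∃ ρ' : Matrix (a × b) (a × b) ℂ,
    Subnormalized ρ' ∧ purifiedDist ρ ρ' ≤ ε ∧ x = Imax ρ'}

/-- Tensor extension `Φ ⊗ id_d` of a map on matrices. -/
def tensorExt (Φ : Matrix a a ℂ → Matrix b b ℂ) (d : ℕ)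
    (M : Matrix (a × Fin d) (a × Fin d) ℂ) : Matrix (b × Fin d) (b × Fin d) ℂ :=
  Matrix.of fun p q => Φ (Matrix.of fun i j => M (i, p.2) (j, q.2)) p.1 q.1

/-- Completely positive trace preserving maps. -/
def IsCPTP (Φ : Matrix a a ℂ →ₗ[ℂ] Matrix b b ℂ) : Prop :=
  (∀ d : ℕ, ∀ M : Matrix (a × Fin d) (a × Fin d) ℂ,
      M.PosSemidef → (tensorExt Φ d M).PosSemidef) ∧
  (∀ M : Matrix a a ℂ, (Φ M).trace = M.trace)

end QIT

open QIT

namespace QITAux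
open QIT

variable {d k : Type*} [Fintype d] [DecidableEq d] [Fintype k] [DecidableEq k]

lemma fcal_of_herm {M : Matrix d d ℂ} (h : M.IsHermitian) (f : ℝ → ℝ) :
    fcal f M = (h.eigenvectorUnitary : Matrix d d ℂ) *
      Matrix.diagonal (fun i => (f (h.eigenvalues i) : ℂ)) *
      (star (h.eigenvectorUnitary : Matrix d d ℂ)) := by
  rw [fcal, dif_pos h]

lemma fcal_mul {M : Matrix d d ℂ} (h : M.IsHermitian) (f g : ℝ → ℝ) :
    fcal f M * fcal g M = fcal (fun x => f x * g x) M := by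
  set u := (h.eigenvectorUnitary : Matrix d d ℂ) with hu
  have h1 : star u * u = 1 := Matrix.mem_unitaryGroup_iff'.mp h.eigenvectorUnitary.2
  rw [fcal_of_herm h, fcal_of_herm h, fcal_of_herm h]
  simp only [Matrix.mul_assoc]
  rw [show star u * (u * (Matrix.diagonal (fun i => (g (h.eigenvalues i) : ℂ)) * star u))
      = Matrix.diagonal (fun i => (g (h.eigenvalues i) : ℂ)) * star u from by
    rw [← Matrix.mul_assoc, h1, Matrix.one_mul]]
  rw [← Matrix.mul_assoc (Matrix.diagonal _), Matrix.diagonal_mul_diagonal]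
  congr 2
  ext i
  push_cast
  ring

lemma fcal_id {M : Matrix d d ℂ} (h : M.IsHermitian) : fcal (fun x => x) M = M := by
  rw [fcal_of_herm h]
  conv_rhs => rw [h.spectral_theorem]
  rfl

lemma fcal_conjTranspose {M : Matrix d d ℂ} (h : M.IsHermitian) (f : ℝ → ℝ) :
    (fcal f M)ᴴ = fcal f M := by
  rw [fcal_of_herm h, Matrix.conjTranspose_mul, Matrix.conjTranspose_mul,
    Matrix.diagonal_conjTranspose]
  simp only [Matrix.star_eq_conjTranspose, Matrix.conjTranspose_conjTranspose]
  rw [← Matrix.mul_assoc]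
  rw [show (star fun i => ((f (h.eigenvalues i)) : ℂ)) = (fun i => ((f (h.eigenvalues i)) : ℂ))
    from funext fun i => by simpa using Complex.conj_ofReal _]

lemma fcal_congr {M : Matrix d d ℂ} {f g : ℝ → ℝ} (h : ∀ x, f x = g x) :
    fcal f M = fcal g M := by
  have : f = g := funext h
  rw [this]

/-- pseudo-inverse via functional calculus -/
def pinv0 (M : Matrix d d ℂ) : Matrix d d ℂ := fcal (fun x => if x = 0 then 0 else x⁻¹) M

lemma psdSqrt_posSemidef {M : Matrix d d ℂ} (h : M.PosSemidef) : (psdSqrt M).PosSemidef := by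
  rw [psdSqrt, dif_pos h]
  have hD : (Matrix.diagonal (((↑) ∘ (√·) ∘ h.1.eigenvalues) : d → ℂ)).PosSemidef :=
    Matrix.posSemidef_diagonal_iff.mpr fun i => by
      simpa using Complex.zero_le_real.mpr (Real.sqrt_nonneg (h.1.eigenvalues i))
  simpa [Matrix.star_eq_conjTranspose] using
    hD.mul_mul_conjTranspose_same (h.1.eigenvectorUnitary : Matrix d d ℂ)

lemma psdSqrt_mul_self {M : Matrix d d ℂ} (h : M.PosSemidef) : psdSqrt M * psdSqrt M = M := by
  rw [psdSqrt, dif_pos h]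
  set u := (h.1.eigenvectorUnitary : Matrix d d ℂ) with hu
  have h1 : star u * u = 1 := Matrix.mem_unitaryGroup_iff'.mp h.1.eigenvectorUnitary.2
  have hDD : Matrix.diagonal (((↑) ∘ (√·) ∘ h.1.eigenvalues) : d → ℂ) *
      Matrix.diagonal (((↑) ∘ (√·) ∘ h.1.eigenvalues) : d → ℂ)
      = Matrix.diagonal (((↑) ∘ h.1.eigenvalues) : d → ℂ) := by
    rw [Matrix.diagonal_mul_diagonal]
    congr 1
    funext i
    simp only [Function.comp_apply]
    rw [← Complex.ofReal_mul, Real.mul_self_sqrt (h.eigenvalues_nonneg i)]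
  calc u * Matrix.diagonal (((↑) ∘ (√·) ∘ h.1.eigenvalues) : d → ℂ) * star u *
        (u * Matrix.diagonal (((↑) ∘ (√·) ∘ h.1.eigenvalues) : d → ℂ) * star u)
      = u * (Matrix.diagonal (((↑) ∘ (√·) ∘ h.1.eigenvalues) : d → ℂ) * (star u * u) *
        Matrix.diagonal (((↑) ∘ (√·) ∘ h.1.eigenvalues) : d → ℂ)) * star u := by
        simp only [Matrix.mul_assoc]
    _ = M := by
        rw [h1, Matrix.mul_one, hDD]
        conv_rhs => rw [h.1.spectral_theorem]
        rfl

section fc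
variable {M : Matrix d d ℂ} (h : M.IsHermitian)

include h

lemma suppProj_mul_self : M * suppProj M = M := by
  rw [suppProj]
  nth_rewrite 1 [← fcal_id h]
  rw [fcal_mul h]
  rw [fcal_congr (g := fun x => x) (fun x => by by_cases hx : x = 0 <;> simp [hx]), fcal_id h]

lemma self_mul_suppProj : suppProj M * M = M := by
  rw [suppProj]
  nth_rewrite 2 [← fcal_id h]
  rw [fcal_mul h]
  rw [fcal_congr (g := fun x => x) (fun x => by by_cases hx : x = 0 <;> simp [hx]), fcal_id h]

lemma pinv0_mul_self : pinv0 M * M = suppProj M := by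
  rw [pinv0]
  nth_rewrite 2 [← fcal_id h]
  rw [fcal_mul h, suppProj]
  exact fcal_congr (fun x => by by_cases hx : x = 0 <;> simp [hx])

lemma self_mul_pinv0 : M * pinv0 M = suppProj M := by
  rw [pinv0]
  nth_rewrite 1 [← fcal_id h]
  rw [fcal_mul h, suppProj]
  exact fcal_congr (fun x => by by_cases hx : x = 0 <;> simp [hx, mul_comm])

lemma pinv0_mul_suppProj : pinv0 M * suppProj M = pinv0 M := by
  rw [pinv0, suppProj, fcal_mul h]
  exact fcal_congr (fun x => by by_cases hx : x = 0 <;> simp [hx])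

lemma suppProj_idem : suppProj M * suppProj M = suppProj M := by
  rw [suppProj, fcal_mul h]
  exact fcal_congr (fun x => by by_cases hx : x = 0 <;> simp [hx])

lemma suppProj_herm : (suppProj M)ᴴ = suppProj M := fcal_conjTranspose h _

lemma pinv0_herm : (pinv0 M)ᴴ = pinv0 M := fcal_conjTranspose h _

end fc

lemma posSemidef_of_idem {Q : Matrix d d ℂ} (h1 : Qᴴ = Q) (h2 : Q * Q = Q) : Q.PosSemidef := by
  have : Q = Qᴴ * Q := by rw [h1, h2]
  rw [this]; exact Matrix.posSemidef_conjTranspose_mul_self Q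

lemma posSemidef_one_sub_idem {Q : Matrix d d ℂ} (h1 : Qᴴ = Q) (h2 : Q * Q = Q) :
    ((1 : Matrix d d ℂ) - Q).PosSemidef := by
  refine posSemidef_of_idem ?_ ?_
  · rw [Matrix.conjTranspose_sub, Matrix.conjTranspose_one, h1]
  · have e : ((1 : Matrix d d ℂ) - Q) * ((1 : Matrix d d ℂ) - Q)
        = 1 - Q - Q + Q * Q := by noncomm_ring
    rw [e, h2]
    abel

lemma trace_re_nonneg {M : Matrix d d ℂ} (h : M.PosSemidef) : 0 ≤ M.trace.re := by
  rw [Matrix.trace, Complex.re_sum]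
  refine Finset.sum_nonneg fun i _ => ?_
  have := h.re_dotProduct_nonneg (Pi.single i 1)
  simpa [dotProduct, Matrix.mulVec_single, Pi.single_apply, Matrix.diag,
    Finset.sum_ite_eq', apply_ite] using this

lemma psd_eq_conjTranspose_mul_self {A : Matrix k k ℂ} (h : A.PosSemidef) :
    ∃ B : Matrix k k ℂ, A = Bᴴ * B := by
  open scoped MatrixOrder in
  obtain ⟨B, hB⟩ := CStarAlgebra.nonneg_iff_eq_star_mul_self.mp h.nonneg
  exact ⟨B, hB⟩

lemma trace_mul_psd_re_nonneg {P Q : Matrix d d ℂ} (hP : P.PosSemidef) (hQ : Q.PosSemidef) :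
    0 ≤ ((P * Q).trace).re := by
  obtain ⟨B, rfl⟩ := psd_eq_conjTranspose_mul_self hP
  rw [← Matrix.trace_mul_cycle]
  exact trace_re_nonneg (hQ.mul_mul_conjTranspose_same B)
lemma trace_conjTranspose_mul (X Y : Matrix k d ℂ) :
    (Xᴴ * Y).trace = ∑ p : k × d, (starRingEnd ℂ) (X p.1 p.2) * Y p.1 p.2 := by
  rw [Fintype.sum_prod_type]
  simp only [Matrix.trace, Matrix.diag, Matrix.mul_apply, Matrix.conjTranspose_apply]
  rw [Finset.sum_comm]
  simp [Complex.star_def]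

lemma trace_CS (X Y : Matrix k d ℂ) :
    ((Xᴴ * Y).trace).re ≤
      Real.sqrt (((Xᴴ * X).trace).re) * Real.sqrt (((Yᴴ * Y).trace).re) := by
  let x : EuclideanSpace ℂ (k × d) := WithLp.toLp 2 (fun p => X p.1 p.2)
  let y : EuclideanSpace ℂ (k × d) := WithLp.toLp 2 (fun p => Y p.1 p.2)
  have hxy : (Xᴴ * Y).trace = (inner ℂ x y : ℂ) := by
    rw [trace_conjTranspose_mul, PiLp.inner_apply]
    refine Finset.sum_congr rfl fun p _ => ?_; simp [x, y, mul_comm]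
  have hxx : (Xᴴ * X).trace = (inner ℂ x x : ℂ) := by
    rw [trace_conjTranspose_mul, PiLp.inner_apply]; refine Finset.sum_congr rfl fun p _ => ?_; simp [x, y, mul_comm, Complex.mul_conj']
  have hyy : (Yᴴ * Y).trace = (inner ℂ y y : ℂ) := by
    rw [trace_conjTranspose_mul, PiLp.inner_apply]; refine Finset.sum_congr rfl fun p _ => ?_; simp [x, y, mul_comm, Complex.mul_conj']
  have h1 : ((Xᴴ * Y).trace).re ≤ ‖(inner ℂ x y : ℂ)‖ := by
    rw [hxy]; exact Complex.re_le_norm _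
  refine h1.trans ?_
  have h2 := norm_inner_le_norm (𝕜 := ℂ) x y
  refine h2.trans_eq ?_
  rw [norm_eq_sqrt_re_inner (𝕜 := ℂ) x, norm_eq_sqrt_re_inner (𝕜 := ℂ) y, hxx, hyy]
  rfl
section polar
variable {S : Matrix d d ℂ} (hS : S.IsHermitian) {N : Matrix k d ℂ} (hN : Nᴴ * N = S * S)

include hS hN

lemma mul_suppProj_eq_self : N * suppProj S = N := by
  have c1 : suppProj S * (S * S) = S * S := by
    rw [← Matrix.mul_assoc, self_mul_suppProj hS]
  have a1 : suppProj S * Nᴴ * (N * suppProj S) = S * S := by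
    calc suppProj S * Nᴴ * (N * suppProj S)
        = suppProj S * (Nᴴ * N * suppProj S) := by simp only [Matrix.mul_assoc]
      _ = suppProj S * (S * (S * suppProj S)) := by rw [hN]; simp only [Matrix.mul_assoc]
      _ = suppProj S * (S * S) := by rw [suppProj_mul_self hS]
      _ = S * S := c1
  have a2 : suppProj S * Nᴴ * N = S * S := by
    rw [Matrix.mul_assoc, hN, ← Matrix.mul_assoc, self_mul_suppProj hS]
  have a3 : Nᴴ * (N * suppProj S) = S * S := by
    rw [← Matrix.mul_assoc, hN, Matrix.mul_assoc, suppProj_mul_self hS]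
  have key : (N * suppProj S - N)ᴴ * (N * suppProj S - N) = 0 := by
    rw [Matrix.conjTranspose_sub, Matrix.conjTranspose_mul, suppProj_herm hS,
      Matrix.sub_mul, Matrix.mul_sub, Matrix.mul_sub, a1, a2, a3, hN]
    abel
  have := Matrix.conjTranspose_mul_self_eq_zero.mp key
  exact sub_eq_zero.mp this

lemma polar_W_mul_S : N * pinv0 S * S = N := by
  rw [Matrix.mul_assoc, pinv0_mul_self hS, mul_suppProj_eq_self hS hN]

lemma polar_WhW : (N * pinv0 S)ᴴ * (N * pinv0 S) = suppProj S := by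
  rw [Matrix.conjTranspose_mul, pinv0_herm hS]
  calc pinv0 S * Nᴴ * (N * pinv0 S)
      = pinv0 S * (Nᴴ * N * pinv0 S) := by simp only [Matrix.mul_assoc]
    _ = pinv0 S * (S * (S * pinv0 S)) := by rw [hN]; simp only [Matrix.mul_assoc]
    _ = pinv0 S * (S * suppProj S) := by rw [self_mul_pinv0 hS]
    _ = pinv0 S * S := by rw [suppProj_mul_self hS]
    _ = suppProj S := pinv0_mul_self hS

lemma polar_WWh_herm : ((N * pinv0 S) * (N * pinv0 S)ᴴ)ᴴ = (N * pinv0 S) * (N * pinv0 S)ᴴ := by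
  rw [Matrix.conjTranspose_mul, Matrix.conjTranspose_conjTranspose]

lemma polar_WWh_idem : ((N * pinv0 S) * (N * pinv0 S)ᴴ) * ((N * pinv0 S) * (N * pinv0 S)ᴴ)
    = (N * pinv0 S) * (N * pinv0 S)ᴴ := by
  have hWP : (N * pinv0 S) * suppProj S = N * pinv0 S := by
    rw [Matrix.mul_assoc, pinv0_mul_suppProj hS]
  calc ((N * pinv0 S) * (N * pinv0 S)ᴴ) * ((N * pinv0 S) * (N * pinv0 S)ᴴ)
      = (N * pinv0 S) * ((N * pinv0 S)ᴴ * (N * pinv0 S)) * (N * pinv0 S)ᴴ := by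
        simp only [Matrix.mul_assoc]
    _ = ((N * pinv0 S) * suppProj S) * (N * pinv0 S)ᴴ := by
        rw [polar_WhW hS hN]
    _ = (N * pinv0 S) * (N * pinv0 S)ᴴ := by rw [hWP]

end polar

lemma trace_contraction_le (N K : Matrix d d ℂ)
    (hK : ((1 : Matrix d d ℂ) - Kᴴ * K).PosSemidef) :
    ((K * Nᴴ).trace).re ≤ ((psdSqrt (Nᴴ * N)).trace).re := by
  have hTpsd : (Nᴴ * N).PosSemidef := Matrix.posSemidef_conjTranspose_mul_self N
  set S := psdSqrt (Nᴴ * N) with hSdef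
  have hSpsd : S.PosSemidef := psdSqrt_posSemidef hTpsd
  have hSh : S.IsHermitian := hSpsd.1
  have hNS : Nᴴ * N = S * S := (psdSqrt_mul_self hTpsd).symm
  set W := N * pinv0 S with hW
  have hWS : W * S = N := polar_W_mul_S hSh hNS
  have hWhW : Wᴴ * W = suppProj S := polar_WhW hSh hNS
  have hQpsd : ((1 : Matrix d d ℂ) - W * Wᴴ).PosSemidef :=
    posSemidef_one_sub_idem (polar_WWh_herm hSh hNS) (polar_WWh_idem hSh hNS)
  set R := psdSqrt S with hR
  have hRpsd : R.PosSemidef := psdSqrt_posSemidef hSpsd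
  have hRh : R.IsHermitian := hRpsd.1
  have hRR : R * R = S := psdSqrt_mul_self hSpsd
  have hNh : Nᴴ = S * Wᴴ := by
    rw [← hWS, Matrix.conjTranspose_mul W S, hSh.eq]
  have m0 : (R * Kᴴ * W)ᴴ = Wᴴ * (K * R) := by
    rw [Matrix.conjTranspose_mul (R * Kᴴ) W, Matrix.conjTranspose_mul R Kᴴ, hRh.eq,
      Matrix.conjTranspose_conjTranspose]
  have step1 : (K * Nᴴ).trace = ((R * Kᴴ * W)ᴴ * R).trace := by
    rw [m0, hNh, Matrix.trace_mul_cycle Wᴴ (K * R) R, Matrix.trace_mul_cycle R Wᴴ (K * R)]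
    congr 1
    rw [← hRR]
    simp only [Matrix.mul_assoc]
  have hZpsd : (K * S * Kᴴ).PosSemidef := hSpsd.mul_mul_conjTranspose_same K
  have m1 : (R * Kᴴ * W)ᴴ * (R * Kᴴ * W) = Wᴴ * (K * (S * (Kᴴ * W))) := by
    rw [m0, ← hRR]
    simp only [Matrix.mul_assoc]
  have hXX : ((R * Kᴴ * W)ᴴ * (R * Kᴴ * W)).trace = ((K * S * Kᴴ) * (W * Wᴴ)).trace := by
    rw [m1, Matrix.trace_mul_comm]
    congr 1
    simp only [Matrix.mul_assoc]
  have cs := trace_CS (R * Kᴴ * W) R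
  have hRhR : (Rᴴ * R).trace = S.trace := by rw [hRh.eq, hRR]
  have hZQ : (((K * S * Kᴴ) * (W * Wᴴ)).trace).re ≤ ((K * S * Kᴴ).trace).re := by
    have split : (K * S * Kᴴ).trace
        = ((K * S * Kᴴ) * (W * Wᴴ)).trace + ((K * S * Kᴴ) * (1 - W * Wᴴ)).trace := by
      rw [← Matrix.trace_add, ← Matrix.mul_add]
      simp
    have pos : 0 ≤ (((K * S * Kᴴ) * (1 - W * Wᴴ)).trace).re :=
      trace_mul_psd_re_nonneg hZpsd hQpsd
    have := congrArg Complex.re split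
    rw [Complex.add_re] at this
    linarith
  have hZS : ((K * S * Kᴴ).trace).re ≤ (S.trace).re := by
    have c : (K * S * Kᴴ).trace = (S * (Kᴴ * K)).trace := by
      rw [Matrix.trace_mul_cycle K S Kᴴ, Matrix.trace_mul_comm (Kᴴ * K) S]
    have split : S.trace = (S * (Kᴴ * K)).trace + (S * (1 - Kᴴ * K)).trace := by
      rw [← Matrix.trace_add, ← Matrix.mul_add]
      simp
    have pos : 0 ≤ ((S * (1 - Kᴴ * K)).trace).re := trace_mul_psd_re_nonneg hSpsd hK
    have := congrArg Complex.re split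
    rw [Complex.add_re] at this
    rw [c]
    linarith
  have htrS : 0 ≤ S.trace.re := trace_re_nonneg hSpsd
  calc ((K * Nᴴ).trace).re = (((R * Kᴴ * W)ᴴ * R).trace).re := by rw [step1]
    _ ≤ Real.sqrt ((((R * Kᴴ * W)ᴴ * (R * Kᴴ * W)).trace).re)
        * Real.sqrt (((Rᴴ * R).trace).re) := cs
    _ ≤ Real.sqrt (S.trace.re) * Real.sqrt (S.trace.re) := by
        refine mul_le_mul (Real.sqrt_le_sqrt ?_) (le_of_eq (by rw [hRhR]))
          (Real.sqrt_nonneg _) (Real.sqrt_nonneg _)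
        rw [hXX]
        exact hZQ.trans hZS
    _ = S.trace.re := Real.mul_self_sqrt htrS
lemma trace_mul_le_fidelity (A B : Matrix k d ℂ) :
    ((Aᴴ * B).trace).re ≤ fidelity (Aᴴ * A) (Bᴴ * B) := by
  have hApsd : (Aᴴ * A).PosSemidef := Matrix.posSemidef_conjTranspose_mul_self A
  have hBpsd : (Bᴴ * B).PosSemidef := Matrix.posSemidef_conjTranspose_mul_self B
  set PA := psdSqrt (Aᴴ * A) with hPA
  set PB := psdSqrt (Bᴴ * B) with hPB
  have hPApsd : PA.PosSemidef := psdSqrt_posSemidef hApsd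
  have hPBpsd : PB.PosSemidef := psdSqrt_posSemidef hBpsd
  have hPAh : PA.IsHermitian := hPApsd.1
  have hPBh : PB.IsHermitian := hPBpsd.1
  have hAA : Aᴴ * A = PA * PA := (psdSqrt_mul_self hApsd).symm
  have hBB : Bᴴ * B = PB * PB := (psdSqrt_mul_self hBpsd).symm
  set WA := A * pinv0 PA with hWA
  set WB := B * pinv0 PB with hWB
  have hA : WA * PA = A := polar_W_mul_S hPAh hAA
  have hB : WB * PB = B := polar_W_mul_S hPBh hBB
  have hWBh : WBᴴ * WB = suppProj PB := polar_WhW hPBh hBB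
  set K := WAᴴ * WB with hK
  have hQA : ((1 : Matrix k k ℂ) - WA * WAᴴ).PosSemidef :=
    posSemidef_one_sub_idem (polar_WWh_herm hPAh hAA) (polar_WWh_idem hPAh hAA)
  have hPBproj : ((1 : Matrix d d ℂ) - suppProj PB).PosSemidef :=
    posSemidef_one_sub_idem (suppProj_herm hPBh) (suppProj_idem hPBh)
  have hKK : ((1 : Matrix d d ℂ) - Kᴴ * K).PosSemidef := by
    have e1 : WBᴴ * ((1 : Matrix k k ℂ) - WA * WAᴴ) * WB = suppProj PB - Kᴴ * K := by
      rw [Matrix.mul_sub, Matrix.mul_one, Matrix.sub_mul, hWBh]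
      congr 1
      rw [hK, Matrix.conjTranspose_mul WAᴴ WB, Matrix.conjTranspose_conjTranspose]
      simp only [Matrix.mul_assoc]
    have e : (1 : Matrix d d ℂ) - Kᴴ * K
        = WBᴴ * ((1 : Matrix k k ℂ) - WA * WAᴴ) * WB + ((1 : Matrix d d ℂ) - suppProj PB) := by
      rw [e1]
      abel
    rw [e]
    have c := hQA.mul_mul_conjTranspose_same WBᴴ
    rw [Matrix.conjTranspose_conjTranspose] at c
    exact c.add hPBproj
  have hAhB : (Aᴴ * B).trace = (K * (PA * PB)ᴴ).trace := by
    rw [Matrix.conjTranspose_mul PA PB, hPAh.eq, hPBh.eq]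
    rw [← hA, ← hB, Matrix.conjTranspose_mul WA PA, hPAh.eq]
    rw [Matrix.trace_mul_cycle PA WAᴴ (WB * PB), Matrix.trace_mul_cycle (WB * PB) PA WAᴴ]
    rw [hK]
    congr 1
    simp only [Matrix.mul_assoc]
  have main := trace_contraction_le (PA * PB) K hKK
  have fid : fidelity (Aᴴ * A) (Bᴴ * B)
      = ((psdSqrt ((PA * PB)ᴴ * (PA * PB))).trace).re := rfl
  rw [fid]
  calc ((Aᴴ * B).trace).re = ((K * (PA * PB)ᴴ).trace).re := by rw [hAhB]
    _ ≤ _ := main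
def blk (ρ X Y σ : Matrix d d ℂ) : Matrix (d × Fin 2) (d × Fin 2) ℂ :=
  Matrix.of fun p q =>
    if p.2 = 0 then (if q.2 = 0 then ρ p.1 q.1 else X p.1 q.1)
    else (if q.2 = 0 then Y p.1 q.1 else σ p.1 q.1)

lemma one_sub_idem {Q : Matrix d d ℂ} (h : Q * Q = Q) :
    ((1 : Matrix d d ℂ) - Q) * ((1 : Matrix d d ℂ) - Q) = 1 - Q := by
  have e : ((1 : Matrix d d ℂ) - Q) * ((1 : Matrix d d ℂ) - Q) = 1 - Q - Q + Q * Q := by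
    noncomm_ring
  rw [e, h]
  abel

lemma fidelity_achieved {ρ σ : Matrix d d ℂ} (hρ : ρ.PosSemidef) (hσ : σ.PosSemidef) :
    ∃ X : Matrix d d ℂ, (X.trace).re = fidelity ρ σ ∧ (blk ρ X Xᴴ σ).PosSemidef := by
  set P := psdSqrt ρ with hPdef
  set Qm := psdSqrt σ with hQdef
  have hPpsd : P.PosSemidef := psdSqrt_posSemidef hρ
  have hQpsd : Qm.PosSemidef := psdSqrt_posSemidef hσ
  have hPh : P.IsHermitian := hPpsd.1
  have hQh : Qm.IsHermitian := hQpsd.1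
  set N := P * Qm with hNdef
  have hTpsd : (Nᴴ * N).PosSemidef := Matrix.posSemidef_conjTranspose_mul_self N
  set S := psdSqrt (Nᴴ * N) with hSdef
  have hSpsd : S.PosSemidef := psdSqrt_posSemidef hTpsd
  have hSh : S.IsHermitian := hSpsd.1
  have hNS : Nᴴ * N = S * S := (psdSqrt_mul_self hTpsd).symm
  set W := N * pinv0 S with hWdef
  have hWS : W * S = N := polar_W_mul_S hSh hNS
  have hWhW : Wᴴ * W = suppProj S := polar_WhW hSh hNS
  have hNh : Nᴴ = S * Wᴴ := by
    rw [← hWS, Matrix.conjTranspose_mul W S, hSh.eq]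
  refine ⟨P * (W * Qm), ?_, ?_⟩
  · -- trace equals fidelity
    have t1 : (P * (W * Qm)).trace = S.trace := by
      rw [Matrix.trace_mul_comm P (W * Qm), Matrix.mul_assoc]
      -- (W * (Qm * P)).trace
      have hQmP : Qm * P = Nᴴ := by
        rw [hNdef, Matrix.conjTranspose_mul P Qm, hPh.eq, hQh.eq]
      rw [hQmP, hNh, ← Matrix.mul_assoc, Matrix.trace_mul_cycle W S Wᴴ, hWhW,
        self_mul_suppProj hSh]
    rw [t1]
    rfl
  · -- the block matrix is PSD
    set X := P * (W * Qm) with hXdef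
    set E := (Matrix.of fun (p q : d × Fin 2) =>
      if p.2 = 0 then (if q.2 = 0 then P p.1 q.1 else (W * Qm) p.1 q.1) else 0) with hEdef
    set R0 := ((1 : Matrix d d ℂ) - suppProj S) * Qm with hR0def
    set G := (Matrix.of fun (p q : d × Fin 2) =>
      if p.2 = 1 then (if q.2 = 1 then R0 p.1 q.1 else 0) else 0) with hGdef
    have hproj_herm : ((1 : Matrix d d ℂ) - suppProj S)ᴴ = 1 - suppProj S := by
      rw [Matrix.conjTranspose_sub, Matrix.conjTranspose_one, suppProj_herm hSh]
    -- block identities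
    have h00 : Pᴴ * P = ρ := by rw [hPh.eq, psdSqrt_mul_self hρ]
    have h01 : Pᴴ * (W * Qm) = X := by rw [hPh.eq, hXdef]
    have h10 : (W * Qm)ᴴ * P = Xᴴ := by
      rw [hXdef, Matrix.conjTranspose_mul P (W * Qm), hPh.eq]
    have h11 : (W * Qm)ᴴ * (W * Qm) + R0ᴴ * R0 = σ := by
      have e1 : (W * Qm)ᴴ * (W * Qm) = Qm * (suppProj S * Qm) := by
        calc (W * Qm)ᴴ * (W * Qm) = Qm * (Wᴴ * W * Qm) := by
              rw [Matrix.conjTranspose_mul W Qm, hQh.eq]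
              simp only [Matrix.mul_assoc]
          _ = Qm * (suppProj S * Qm) := by rw [hWhW]
      have e2 : R0ᴴ * R0 = Qm * (((1 : Matrix d d ℂ) - suppProj S) * Qm) := by
        calc R0ᴴ * R0
            = Qm * (((1 : Matrix d d ℂ) - suppProj S)ᴴ
                * (((1 : Matrix d d ℂ) - suppProj S) * Qm)) := by
              rw [hR0def, Matrix.conjTranspose_mul ((1 : Matrix d d ℂ) - suppProj S) Qm, hQh.eq]
              simp only [Matrix.mul_assoc]
          _ = Qm * ((((1 : Matrix d d ℂ) - suppProj S)
                * ((1 : Matrix d d ℂ) - suppProj S)) * Qm) := by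
              rw [hproj_herm]
              simp only [Matrix.mul_assoc]
          _ = Qm * (((1 : Matrix d d ℂ) - suppProj S) * Qm) := by
              rw [one_sub_idem (suppProj_idem hSh)]
      rw [e1, e2, ← Matrix.mul_add, ← Matrix.add_mul]
      have : suppProj S + ((1 : Matrix d d ℂ) - suppProj S) = 1 := by abel
      rw [this, Matrix.one_mul, psdSqrt_mul_self hσ]
    have hblk : blk ρ X Xᴴ σ = Eᴴ * E + Gᴴ * G := by
      ext p q
      obtain ⟨i, a⟩ := p
      obtain ⟨j, b⟩ := q
      have hE : (Eᴴ * E) (i, a) (j, b)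
          = ((if a = 0 then P else W * Qm)ᴴ * (if b = 0 then P else W * Qm)) i j := by
        by_cases ha : a = 0 <;> by_cases hb : b = 0 <;>
          simp [hEdef, ha, hb, Matrix.mul_apply, Matrix.conjTranspose_apply,
            Fintype.sum_prod_type, Fin.sum_univ_two, Finset.sum_comm, mul_comm]
      have hG : (Gᴴ * G) (i, a) (j, b)
          = if a = 1 ∧ b = 1 then (R0ᴴ * R0) i j else 0 := by
        by_cases ha : a = 1 <;> by_cases hb : b = 1 <;>
          simp [hGdef, ha, hb, Matrix.mul_apply, Matrix.conjTranspose_apply,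
            Fintype.sum_prod_type, Fin.sum_univ_two, Finset.sum_comm, mul_comm]
      have hcase : ∀ c : Fin 2, c = 0 ∨ c = 1 := by decide
      rcases hcase a with ha | ha <;> rcases hcase b with hb | hb <;> subst ha <;> subst hb
      · simpa [blk, hE, hG] using (congrFun (congrFun h00 i) j).symm
      · simpa [blk, hE, hG] using (congrFun (congrFun h01 i) j).symm
      · simpa [blk, hE, hG] using (congrFun (congrFun h10 i) j).symm
      · simpa [blk, hE, hG, Matrix.add_apply] using (congrFun (congrFun h11 i) j).symm
    rw [hblk]
    exact (Matrix.posSemidef_conjTranspose_mul_self E).add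
      (Matrix.posSemidef_conjTranspose_mul_self G)
lemma fidelity_nonneg (ρ σ : Matrix d d ℂ) : 0 ≤ fidelity ρ σ := by
  unfold fidelity trNorm
  exact trace_re_nonneg (psdSqrt_posSemidef (Matrix.posSemidef_conjTranspose_mul_self _))

lemma fidelity_mono {n m : Type*} [Fintype n] [DecidableEq n] [Fintype m] [DecidableEq m]
    (Φ : Matrix n n ℂ →ₗ[ℂ] Matrix m m ℂ) (hΦ : IsCPTP Φ)
    {ρ σ : Matrix n n ℂ} (hρ : ρ.PosSemidef) (hσ : σ.PosSemidef) :
    fidelity ρ σ ≤ fidelity (Φ ρ) (Φ σ) := by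
  obtain ⟨X, hXtr, hXpsd⟩ := fidelity_achieved hρ hσ
  have hT := hΦ.1 2 (blk ρ X Xᴴ σ) hXpsd
  obtain ⟨C, hC⟩ := psd_eq_conjTranspose_mul_self hT
  set A := (Matrix.of fun (p : m × Fin 2) (i : m) => C p (i, 0)) with hAdef
  set B := (Matrix.of fun (p : m × Fin 2) (i : m) => C p (i, 1)) with hBdef
  have key : ∀ (i j : m) (a b : Fin 2),
      Φ (Matrix.of fun x y => blk ρ X Xᴴ σ (x, a) (y, b)) i j
        = ∑ p : m × Fin 2, (starRingEnd ℂ) (C p (i, a)) * C p (j, b) := by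
    intro i j a b
    calc Φ (Matrix.of fun x y => blk ρ X Xᴴ σ (x, a) (y, b)) i j
        = tensorExt Φ 2 (blk ρ X Xᴴ σ) (i, a) (j, b) := rfl
      _ = (Cᴴ * C) (i, a) (j, b) := by rw [← hC]
      _ = ∑ p : m × Fin 2, (starRingEnd ℂ) (C p (i, a)) * C p (j, b) := by
          simp [Matrix.mul_apply, Matrix.conjTranspose_apply]
  have hblk0 : (Matrix.of fun x y => blk ρ X Xᴴ σ (x, (0 : Fin 2)) (y, (0 : Fin 2))) = ρ := by
    ext x y; simp [blk]
  have hblk1 : (Matrix.of fun x y => blk ρ X Xᴴ σ (x, (0 : Fin 2)) (y, (1 : Fin 2))) = X := by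
    ext x y; simp [blk]
  have hblk2 : (Matrix.of fun x y => blk ρ X Xᴴ σ (x, (1 : Fin 2)) (y, (1 : Fin 2))) = σ := by
    ext x y; simp [blk]
  have hAA : Aᴴ * A = Φ ρ := by
    ext i j
    rw [← hblk0, key i j 0 0]
    simp [hAdef, Matrix.mul_apply, Matrix.conjTranspose_apply]
  have hBB : Bᴴ * B = Φ σ := by
    ext i j
    rw [← hblk2, key i j 1 1]
    simp [hBdef, Matrix.mul_apply, Matrix.conjTranspose_apply]
  have hAB : Aᴴ * B = Φ X := by
    ext i j
    rw [← hblk1, key i j 0 1]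
    simp [hAdef, hBdef, Matrix.mul_apply, Matrix.conjTranspose_apply]
  calc fidelity ρ σ = (X.trace).re := hXtr.symm
    _ = ((Φ X).trace).re := by rw [hΦ.2 X]
    _ = ((Aᴴ * B).trace).re := by rw [hAB]
    _ ≤ fidelity (Aᴴ * A) (Bᴴ * B) := trace_mul_le_fidelity A B
    _ = fidelity (Φ ρ) (Φ σ) := by rw [hAA, hBB]

end QITAux


open QITAux

/-- The purified distance is monotone under CPTP maps. -/
theorem purifiedDist_mono_CPTP {n m : Type*} [Fintype n] [DecidableEq n]
    [Fintype m] [DecidableEq m]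
    (Φ : Matrix n n ℂ →ₗ[ℂ] Matrix m m ℂ) (hΦ : IsCPTP Φ)
    (ρ σ : Matrix n n ℂ) (hρ : Subnormalized ρ) (hσ : Subnormalized σ) :
    purifiedDist (Φ ρ) (Φ σ) ≤ purifiedDist ρ σ := by
  have hF : fidelity ρ σ ≤ fidelity (Φ ρ) (Φ σ) := fidelity_mono Φ hΦ hρ.1 hσ.1
  have htr1 : (Φ ρ).trace = ρ.trace := hΦ.2 ρ
  have htr2 : (Φ σ).trace = σ.trace := hΦ.2 σ
  have hg : genFid ρ σ ≤ genFid (Φ ρ) (Φ σ) := by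
    unfold genFid
    rw [htr1, htr2]
    linarith
  have hg0 : 0 ≤ genFid ρ σ := add_nonneg (fidelity_nonneg ρ σ) (Real.sqrt_nonneg _)
  unfold purifiedDist
  apply Real.sqrt_le_sqrt
  nlinarith
end
end

section
/- Entropy-gap upper bound for the max-information: for any subnormalized bipartite state ρ_AB, I_max(A:B)_ρ ≤ H_R(A)_ρ − H_min(A|B)_ρ, where H_R(A)_ρ = −log λ_min(ρ_A) with λ_min the smallest nonzero eigenvalue of ρ_A. -/
open scoped Kronecker BigOperators ComplexOrder
open Matrix MeasureTheory

noncomputable section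
open scoped Classical

open QIT



namespace ImaxProof

open QIT

variable {n : Type*} [Fintype n] [DecidableEq n]

lemma fcal_eq {M : Matrix n n ℂ} (h : M.IsHermitian) (f : ℝ → ℝ) :
    fcal f M = (h.eigenvectorUnitary : Matrix n n ℂ) *
      Matrix.diagonal (fun i => (f (h.eigenvalues i) : ℂ)) *
      (star (h.eigenvectorUnitary : Matrix n n ℂ)) := by
  rw [fcal, dif_pos h]

lemma fcal_mul_fcal {M : Matrix n n ℂ} (h : M.IsHermitian) (f g : ℝ → ℝ) :
    fcal f M * fcal g M = fcal (fun x => f x * g x) M := by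
  rw [fcal_eq h f, fcal_eq h g, fcal_eq h]
  set U := (h.eigenvectorUnitary : Matrix n n ℂ) with hU
  have h1 : star U * U = 1 := Unitary.coe_star_mul_self _
  calc U * Matrix.diagonal (fun i => (f (h.eigenvalues i) : ℂ)) * star U *
        (U * Matrix.diagonal (fun i => (g (h.eigenvalues i) : ℂ)) * star U)
      = U * (Matrix.diagonal (fun i => (f (h.eigenvalues i) : ℂ)) * ((star U * U) *
          Matrix.diagonal (fun i => (g (h.eigenvalues i) : ℂ)))) * star U := by
        noncomm_ring
    _ = U * Matrix.diagonal (fun i => (f (h.eigenvalues i) * g (h.eigenvalues i) : ℂ)) * star U := by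
        rw [h1, one_mul, Matrix.diagonal_mul_diagonal]
    _ = _ := by push_cast; rfl

lemma fcal_isHermitian {M : Matrix n n ℂ} (h : M.IsHermitian) (f : ℝ → ℝ) :
    (fcal f M).IsHermitian := by
  rw [fcal_eq h f, Matrix.star_eq_conjTranspose]
  refine Matrix.isHermitian_mul_mul_conjTranspose _ ?_
  rw [Matrix.IsHermitian, Matrix.diagonal_conjTranspose]
  simp only [Pi.star_def, Complex.star_def, Complex.conj_ofReal]

lemma fcal_posSemidef {M : Matrix n n ℂ} (h : M.IsHermitian) (f : ℝ → ℝ)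
    (hf : ∀ i, 0 ≤ f (h.eigenvalues i)) : (fcal f M).PosSemidef := by
  rw [fcal_eq h f, Matrix.star_eq_conjTranspose]
  exact (Matrix.PosSemidef.diagonal (fun i => by
    simpa using Complex.zero_le_real.mpr (hf i))).mul_mul_conjTranspose_same _

lemma fcal_id {M : Matrix n n ℂ} (h : M.IsHermitian) : fcal (fun x => x) M = M := by
  rw [fcal_eq h]
  exact h.spectral_theorem.symm

lemma fcal_const_one {M : Matrix n n ℂ} (h : M.IsHermitian) : fcal (fun _ => (1:ℝ)) M = 1 := by
  rw [fcal_eq h]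
  simp [Unitary.coe_mul_star_self]

lemma fcal_trace {M : Matrix n n ℂ} (h : M.IsHermitian) (f : ℝ → ℝ) :
    (fcal f M).trace = ∑ i, (f (h.eigenvalues i) : ℂ) := by
  rw [fcal_eq h f, Matrix.trace_mul_cycle, Unitary.coe_star_mul_self, one_mul,
    Matrix.trace_diagonal]

lemma fcal_sub_smul {M : Matrix n n ℂ} (h : M.IsHermitian) (f g : ℝ → ℝ) (c : ℝ) :
    fcal f M - c • fcal g M = fcal (fun x => f x - c * g x) M := by
  rw [fcal_eq h f, fcal_eq h g, fcal_eq h]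
  have hc : c • ((h.eigenvectorUnitary : Matrix n n ℂ) *
      Matrix.diagonal (fun i => (g (h.eigenvalues i) : ℂ)) *
      (star (h.eigenvectorUnitary : Matrix n n ℂ)))
      = (h.eigenvectorUnitary : Matrix n n ℂ) *
        (c • Matrix.diagonal (fun i => (g (h.eigenvalues i) : ℂ))) *
        (star (h.eigenvectorUnitary : Matrix n n ℂ)) := by
    rw [← smul_mul_assoc, ← mul_smul_comm]
  rw [hc, ← Matrix.sub_mul, ← Matrix.mul_sub]
  congr 2
  ext i j
  rcases eq_or_ne i j with rfl | hij
  · simp only [Matrix.sub_apply, Matrix.smul_apply, Matrix.diagonal_apply_eq, Complex.real_smul]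
    push_cast
    ring
  · simp [Matrix.diagonal_apply_ne _ hij]

lemma psd_smul_real {M : Matrix n n ℂ} (hM : M.PosSemidef) {r : ℝ} (hr : 0 ≤ r) :
    (r • M).PosSemidef := by
  have : r • M = (r : ℂ) • M := by
    ext i j
    simp [Complex.real_smul]
  rw [this]
  refine Matrix.PosSemidef.of_dotProduct_mulVec_nonneg ?_ ?_
  · rw [Matrix.IsHermitian, Matrix.conjTranspose_smul, hM.1]
    congr 1
    simp [Complex.star_def, Complex.conj_ofReal]
  · intro x
    rw [Matrix.smul_mulVec, dotProduct_smul]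
    exact mul_nonneg (Complex.zero_le_real.mpr hr) (hM.dotProduct_mulVec_nonneg x)

lemma psd_trace_re_nonneg {M : Matrix n n ℂ} (hM : M.PosSemidef) : 0 ≤ M.trace.re := by
  have hdiag : ∀ i, 0 ≤ (M i i).re := by
    intro i
    have h := hM.dotProduct_mulVec_nonneg (Pi.single i 1)
    have : (dotProduct (star (Pi.single i 1)) (M *ᵥ Pi.single i 1)) = M i i := by
      simp [dotProduct, Matrix.mulVec, Pi.single_apply, Finset.mul_sum, apply_ite]
    rw [this] at h
    exact (Complex.nonneg_iff.mp h).1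
  rw [Matrix.trace, Complex.re_sum]
  exact Finset.sum_nonneg fun i _ => hdiag i

lemma trace_conjTranspose_mul_self_eq_zero {m : Type*} [Fintype m] {C : Matrix m n ℂ}
    (h : (Cᴴ * C).trace = 0) : C = 0 := by
  have hre : ∑ j, ∑ i, Complex.normSq (C i j) = 0 := by
    have : (Cᴴ * C).trace = ∑ j, ∑ i, (Complex.normSq (C i j) : ℂ) := by
      rw [Matrix.trace]
      congr 1
      funext j
      rw [Matrix.diag_apply, Matrix.mul_apply]
      congr 1
      funext i
      rw [Matrix.conjTranspose_apply, Complex.normSq_eq_conj_mul_self]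
      rfl
    rw [this] at h
    have h2 := congrArg Complex.re h
    push_cast at h2
    simpa using h2
  ext i j
  have h1 : ∀ j' ∈ Finset.univ, (0:ℝ) ≤ ∑ i, Complex.normSq (C i j') :=
    fun j' _ => Finset.sum_nonneg fun i _ => Complex.normSq_nonneg _
  have h2 := (Finset.sum_eq_zero_iff_of_nonneg h1).mp hre j (Finset.mem_univ j)
  have h3 := (Finset.sum_eq_zero_iff_of_nonneg
    (fun i' _ => Complex.normSq_nonneg (C i' j))).mp h2 i (Finset.mem_univ i)
  simpa using Complex.normSq_eq_zero.mp h3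

lemma psdSqrt_eq_fcal {M : Matrix n n ℂ} (hM : M.PosSemidef) :
    psdSqrt M = fcal Real.sqrt M := by
  rw [psdSqrt, dif_pos hM, fcal_eq hM.1]
  rfl

lemma psdSqrt_isHermitian {M : Matrix n n ℂ} (hM : M.PosSemidef) : (psdSqrt M).IsHermitian := by
  rw [psdSqrt_eq_fcal hM]
  exact fcal_isHermitian hM.1 _

lemma psdSqrt_mul_self {M : Matrix n n ℂ} (hM : M.PosSemidef) : psdSqrt M * psdSqrt M = M := by
  rw [psdSqrt_eq_fcal hM, fcal_mul_fcal hM.1]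
  nth_rewrite 2 [← fcal_id hM.1]
  rw [fcal_eq hM.1, fcal_eq hM.1]
  congr 3
  funext i
  rw [Real.mul_self_sqrt (hM.eigenvalues_nonneg i)]

lemma psd_trace_eq_zero {M : Matrix n n ℂ} (hM : M.PosSemidef) (h : M.trace = 0) : M = 0 := by
  have hsq : (psdSqrt M) ᴴ * psdSqrt M = M := by
    rw [psdSqrt_isHermitian hM]
    exact psdSqrt_mul_self hM
  have := trace_conjTranspose_mul_self_eq_zero (C := psdSqrt M) (by rw [hsq, h])
  rw [← hsq, this, Matrix.conjTranspose_zero, Matrix.mul_zero]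

variable {p : Type*} [Fintype p] [DecidableEq p]

lemma kron_conjTranspose (A : Matrix n n ℂ) (B : Matrix p p ℂ) :
    (A ⊗ₖ B)ᴴ = Aᴴ ⊗ₖ Bᴴ := by
  ext ⟨i, k⟩ ⟨j, l⟩
  simp [Matrix.conjTranspose_apply, Matrix.kroneckerMap_apply, StarMul.star_mul, mul_comm]

lemma sub_kron (A B : Matrix n n ℂ) (C : Matrix p p ℂ) :
    (A - B) ⊗ₖ C = A ⊗ₖ C - B ⊗ₖ C := by
  ext ⟨i, k⟩ ⟨j, l⟩
  simp [Matrix.kroneckerMap_apply, sub_mul]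

lemma psd_kron {A : Matrix n n ℂ} {B : Matrix p p ℂ} (hA : A.PosSemidef) (hB : B.PosSemidef) :
    (A ⊗ₖ B).PosSemidef := by
  exact hA.kronecker hB

section PT

variable {a b : Type*} [Fintype a] [DecidableEq a] [Fintype b] [DecidableEq b]

lemma ptrB_trace (ρ : Matrix (a × b) (a × b) ℂ) : (ptrB ρ).trace = ρ.trace := by
  simp [Matrix.trace, ptrB, Fintype.sum_prod_type, Matrix.diag_apply]

lemma ptrB_isHermitian {ρ : Matrix (a × b) (a × b) ℂ} (hρ : ρ.IsHermitian) :
    (ptrB ρ).IsHermitian := by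
  have happ : ∀ p q, star (ρ p q) = ρ q p := fun p q => congrFun (congrFun hρ q) p
  ext i j
  simp only [Matrix.conjTranspose_apply, ptrB, Matrix.of_apply, star_sum]
  exact Finset.sum_congr rfl fun k _ => happ _ _

lemma ptrB_posSemidef {ρ : Matrix (a × b) (a × b) ℂ} (hρ : ρ.PosSemidef) :
    (ptrB ρ).PosSemidef := by
  refine Matrix.PosSemidef.of_dotProduct_mulVec_nonneg (ptrB_isHermitian hρ.1) fun x => ?_
  have key : dotProduct (star x) ((ptrB ρ) *ᵥ x)
      = ∑ k : b, dotProduct (star (fun p : a × b => if p.2 = k then x p.1 else 0))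
          (ρ *ᵥ (fun p : a × b => if p.2 = k then x p.1 else 0)) := by
    simp only [dotProduct, Matrix.mulVec, ptrB, Matrix.of_apply, Pi.star_apply,
      Fintype.sum_prod_type, apply_ite (star : ℂ → ℂ), star_zero, ite_mul, zero_mul,
      mul_ite, mul_zero, Finset.sum_ite_eq', Finset.mem_univ, if_true,
      Finset.mul_sum, Finset.sum_mul]
    have hR : ∑ k : b, ∑ x2 : a, ∑ x3 : b, ∑ x4 : a,
          (if x3 = k then star (x x2) * (ρ (x2, x3) (x4, k) * x x4) else 0)
        = ∑ x2 : a, ∑ x3 : b, ∑ x4 : a, star (x x2) * (ρ (x2, x3) (x4, x3) * x x4) := by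
      rw [Finset.sum_comm]
      refine Finset.sum_congr rfl fun x2 _ => ?_
      rw [Finset.sum_comm]
      refine Finset.sum_congr rfl fun x3 _ => ?_
      rw [Finset.sum_comm]
      refine Finset.sum_congr rfl fun x4 _ => ?_
      rw [Finset.sum_ite_eq]
      simp
    exact (Finset.sum_congr rfl fun x1 _ => Finset.sum_comm).trans hR.symm
  rw [key]
  exact Finset.sum_nonneg fun k _ => hρ.dotProduct_mulVec_nonneg _

lemma trace_mul_kron_one (ρ : Matrix (a × b) (a × b) ℂ) (M : Matrix a a ℂ) :
    (ρ * (M ⊗ₖ (1 : Matrix b b ℂ))).trace = (ptrB ρ * M).trace := by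
  simp only [Matrix.trace, Matrix.diag_apply, Matrix.mul_apply, ptrB, Matrix.of_apply,
    Matrix.kroneckerMap_apply, Matrix.one_apply, Fintype.sum_prod_type, mul_ite, mul_one,
    mul_zero, Finset.sum_ite_eq', Finset.mem_univ, if_true, Finset.sum_mul]
  exact Finset.sum_congr rfl fun i _ => Finset.sum_comm

end PT

section Spec

variable {M : Matrix n n ℂ}

lemma suppProj_mul_self (h : M.IsHermitian) : suppProj M * M = M := by
  rw [suppProj]
  nth_rewrite 2 [(fcal_id h).symm]
  rw [fcal_mul_fcal h]
  have hfg : (fun x : ℝ => (if x = 0 then (0:ℝ) else 1) * x) = fun x : ℝ => x := by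
    funext x
    by_cases hx : x = 0 <;> simp [hx]
  rw [hfg, fcal_id h]

lemma self_mul_suppProj (h : M.IsHermitian) : M * suppProj M = M := by
  rw [suppProj]
  nth_rewrite 1 [(fcal_id h).symm]
  rw [fcal_mul_fcal h]
  have hfg : (fun x : ℝ => x * (if x = 0 then (0:ℝ) else 1)) = fun x : ℝ => x := by
    funext x
    by_cases hx : x = 0 <;> simp [hx]
  rw [hfg, fcal_id h]

lemma suppProj_idem (h : M.IsHermitian) : suppProj M * suppProj M = suppProj M := by
  rw [suppProj, fcal_mul_fcal h]
  have hfg : (fun x : ℝ => (if x = 0 then (0:ℝ) else 1) * (if x = 0 then (0:ℝ) else 1))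
      = fun x : ℝ => if x = 0 then (0:ℝ) else 1 := by
    funext x
    by_cases hx : x = 0 <;> simp [hx]
  rw [hfg]

lemma suppProj_isHermitian (h : M.IsHermitian) : (suppProj M).IsHermitian :=
  fcal_isHermitian h _

lemma exists_eig_ne (h : M.IsHermitian) (hM0 : M ≠ 0) : ∃ i, h.eigenvalues i ≠ 0 := by
  by_contra hc
  push_neg at hc
  apply hM0
  have : M = fcal (fun x => x) M := (fcal_id h).symm
  rw [this, fcal_eq h]
  have : (Matrix.diagonal (fun i => ((h.eigenvalues i : ℝ) : ℂ))) = 0 := by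
    ext i j
    rcases eq_or_ne i j with rfl | hij
    · simp [hc i]
    · simp [Matrix.diagonal_apply_ne _ hij]
  rw [this, Matrix.mul_zero, Matrix.zero_mul]

lemma trace_re_eq_sum_eig (h : M.IsHermitian) : M.trace.re = ∑ i, h.eigenvalues i := by
  have h1 := fcal_trace h (fun x => x)
  rw [fcal_id h] at h1
  have := congrArg Complex.re h1
  rw [this, Complex.re_sum]
  simp

lemma exists_mem_suppL (hM : M.PosSemidef) (hM0 : M ≠ 0) :
    ∃ l : ℝ, (M - (2:ℝ)^l • suppProj M).PosSemidef := by
  have h := hM.1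
  obtain ⟨i0, hi0⟩ := exists_eig_ne h hM0
  set t : Finset n := Finset.univ.filter (fun i => h.eigenvalues i ≠ 0) with ht
  have htne : t.Nonempty := ⟨i0, by simp [ht, hi0]⟩
  set c := t.inf' htne h.eigenvalues with hc
  have hcpos : 0 < c := by
    rw [hc, Finset.lt_inf'_iff]
    intro i hi
    have hne : h.eigenvalues i ≠ 0 := by simpa [ht] using hi
    exact lt_of_le_of_ne (hM.eigenvalues_nonneg i) (Ne.symm hne)
  refine ⟨Real.logb 2 c, ?_⟩
  rw [Real.rpow_logb (by norm_num) (by norm_num) hcpos]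
  rw [suppProj]
  nth_rewrite 1 [(fcal_id h).symm]
  rw [fcal_sub_smul h]
  refine fcal_posSemidef h _ fun i => ?_
  by_cases hi : h.eigenvalues i = 0
  · simp [hi]
  · simp only [hi, if_false, mul_one, sub_nonneg]
    exact Finset.inf'_le _ (by simp [ht, hi])

lemma one_sub_psd (hM : M.PosSemidef) (htr : M.trace.re ≤ 1) :
    ((1 : Matrix n n ℂ) - M).PosSemidef := by
  have h := hM.1
  have heq : (1 : Matrix n n ℂ) - M = fcal (fun x => 1 - 1 * x) M := by
    rw [← fcal_sub_smul h (fun _ => 1) (fun x => x) 1, one_smul, fcal_const_one h, fcal_id h]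
  rw [heq]
  refine fcal_posSemidef h _ fun i => ?_
  simp only [one_mul, sub_nonneg]
  calc h.eigenvalues i ≤ ∑ j, h.eigenvalues j :=
        Finset.single_le_sum (fun j _ => hM.eigenvalues_nonneg j) (Finset.mem_univ i)
    _ = M.trace.re := (trace_re_eq_sum_eig h).symm
    _ ≤ 1 := htr

lemma suppL_nonpos (hM : M.PosSemidef) (hM0 : M ≠ 0) (htr : M.trace.re ≤ 1) :
    ∀ l : ℝ, (M - (2:ℝ)^l • suppProj M).PosSemidef → l ≤ 0 := by
  intro l hl
  have h := hM.1
  obtain ⟨i0, hi0⟩ := exists_eig_ne h hM0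
  have hPtr : (suppProj M).trace.re
      = ∑ i, (if h.eigenvalues i = 0 then (0:ℝ) else 1) := by
    have h1 := congrArg Complex.re (fcal_trace h (fun x => if x = 0 then 0 else 1))
    rw [suppProj, h1, Complex.re_sum]
    refine Finset.sum_congr rfl fun i _ => by simp
  have hP1 : 1 ≤ (suppProj M).trace.re := by
    rw [hPtr]
    have hle := Finset.single_le_sum (f := fun i => if h.eigenvalues i = 0 then (0:ℝ) else 1)
      (fun j _ => by by_cases hj : h.eigenvalues j = 0 <;> simp [hj]) (Finset.mem_univ i0)
    simpa [hi0] using hle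
  have htre := psd_trace_re_nonneg hl
  rw [Matrix.trace_sub, Matrix.trace_smul, Complex.sub_re, Complex.smul_re, smul_eq_mul] at htre
  have hpow : (0:ℝ) < (2:ℝ)^l := Real.rpow_pos_of_pos (by norm_num) l
  have h2 : (2:ℝ)^l ≤ 1 := by
    calc (2:ℝ)^l = (2:ℝ)^l * 1 := (mul_one _).symm
      _ ≤ (2:ℝ)^l * (suppProj M).trace.re := by
          exact mul_le_mul_of_nonneg_left hP1 hpow.le
      _ ≤ M.trace.re := by linarith
      _ ≤ 1 := htr
  have : (2:ℝ)^l ≤ (2:ℝ)^(0:ℝ) := by rw [Real.rpow_zero]; exact h2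
  exact (Real.rpow_le_rpow_left_iff one_lt_two).mp this

lemma suppProj_zero : suppProj (0 : Matrix n n ℂ) = 0 := by
  have h : (0 : Matrix n n ℂ).IsHermitian := Matrix.isHermitian_zero
  have h0 : ∀ i, h.eigenvalues i = 0 := by
    intro i
    have hd := Matrix.IsHermitian.conjStarAlgAut_star_eigenvectorUnitary h
    rw [Unitary.conjStarAlgAut_apply] at hd
    rw [Matrix.mul_zero, Matrix.zero_mul] at hd
    have := congrFun (congrFun hd.symm i) i
    rw [Matrix.diagonal_apply_eq] at this
    simpa using this
  rw [suppProj, fcal_eq h]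
  have : (Matrix.diagonal fun i =>
      (((if h.eigenvalues i = 0 then (0:ℝ) else 1) : ℝ) : ℂ)) = 0 := by
    ext i j
    rcases eq_or_ne i j with rfl | hij
    · simp [h0 i]
    · simp [Matrix.diagonal_apply_ne _ hij]
  rw [this, Matrix.mul_zero, Matrix.zero_mul]

end Spec

section Main

variable {a b : Type*} [Fintype a] [DecidableEq a] [Fintype b] [DecidableEq b]
variable {ρ : Matrix (a × b) (a × b) ℂ} {σ : Matrix b b ℂ}

lemma trace_re_pos (hρ : ρ.PosSemidef) (hρ0 : ρ ≠ 0) : 0 < ρ.trace.re := by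
  rcases lt_or_eq_of_le (psd_trace_re_nonneg hρ) with h | h
  · exact h
  · exfalso
    apply hρ0
    apply psd_trace_eq_zero hρ
    have him : ρ.trace.im = 0 := by
      have h1 := Matrix.trace_conjTranspose ρ
      rw [hρ.1.eq] at h1
      have := congrArg Complex.im h1
      simp only [Complex.star_def, Complex.conj_im] at this
      linarith
    rw [Complex.ext_iff]
    constructor
    · simp [← h]
    · simp [him]

lemma kron_one_isHermitian {P : Matrix a a ℂ} (hP : P.IsHermitian) :
    (P ⊗ₖ (1 : Matrix b b ℂ)).IsHermitian := by
  rw [Matrix.IsHermitian, kron_conjTranspose, hP.eq, Matrix.conjTranspose_one]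

lemma proj_kron_sandwich (hρ : ρ.PosSemidef) :
    (suppProj (ptrB ρ) ⊗ₖ (1 : Matrix b b ℂ)) * ρ * (suppProj (ptrB ρ) ⊗ₖ (1 : Matrix b b ℂ))
      = ρ := by
  have hA : (ptrB ρ).PosSemidef := ptrB_posSemidef hρ
  have h := hA.1
  have hPherm : (suppProj (ptrB ρ)).IsHermitian := suppProj_isHermitian h
  have hQherm : (((1 : Matrix a a ℂ) - suppProj (ptrB ρ)) ⊗ₖ (1 : Matrix b b ℂ)).IsHermitian := by
    refine kron_one_isHermitian ?_
    rw [Matrix.IsHermitian, Matrix.conjTranspose_sub, Matrix.conjTranspose_one, hPherm.eq]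
  have hQQ : (((1 : Matrix a a ℂ) - suppProj (ptrB ρ)) ⊗ₖ (1 : Matrix b b ℂ))
      * (((1 : Matrix a a ℂ) - suppProj (ptrB ρ)) ⊗ₖ (1 : Matrix b b ℂ))
      = ((1 : Matrix a a ℂ) - suppProj (ptrB ρ)) ⊗ₖ (1 : Matrix b b ℂ) := by
    rw [← Matrix.mul_kronecker_mul, Matrix.one_mul]
    congr 1
    rw [Matrix.sub_mul, Matrix.one_mul, Matrix.mul_sub, Matrix.mul_one, suppProj_idem h,
      sub_self, sub_zero]
  have htrQ : (ρ * (((1 : Matrix a a ℂ) - suppProj (ptrB ρ)) ⊗ₖ (1 : Matrix b b ℂ))).trace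
      = 0 := by
    rw [trace_mul_kron_one, Matrix.mul_sub, Matrix.mul_one, self_mul_suppProj h, sub_self,
      Matrix.trace_zero]
  have hsq : psdSqrt ρ * psdSqrt ρ = ρ := psdSqrt_mul_self hρ
  have hC : (psdSqrt ρ * (((1 : Matrix a a ℂ) - suppProj (ptrB ρ)) ⊗ₖ (1 : Matrix b b ℂ)))ᴴ
        * (psdSqrt ρ * (((1 : Matrix a a ℂ) - suppProj (ptrB ρ)) ⊗ₖ (1 : Matrix b b ℂ)))
      = (((1 : Matrix a a ℂ) - suppProj (ptrB ρ)) ⊗ₖ (1 : Matrix b b ℂ)) * ρ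
        * (((1 : Matrix a a ℂ) - suppProj (ptrB ρ)) ⊗ₖ (1 : Matrix b b ℂ)) := by
    rw [Matrix.conjTranspose_mul, hQherm.eq, (psdSqrt_isHermitian hρ).eq]
    have hassoc : ∀ X Y : Matrix (a × b) (a × b) ℂ, X * Y * (Y * X) = X * (Y * Y) * X := by
      intro X Y
      noncomm_ring
    rw [hassoc, hsq]
  have hCz : psdSqrt ρ * (((1 : Matrix a a ℂ) - suppProj (ptrB ρ)) ⊗ₖ (1 : Matrix b b ℂ)) = 0 := by
    apply trace_conjTranspose_mul_self_eq_zero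
    rw [hC, Matrix.trace_mul_cycle, hQQ, Matrix.trace_mul_comm]
    exact htrQ
  have hρQ : ρ * (((1 : Matrix a a ℂ) - suppProj (ptrB ρ)) ⊗ₖ (1 : Matrix b b ℂ)) = 0 := by
    calc ρ * (((1 : Matrix a a ℂ) - suppProj (ptrB ρ)) ⊗ₖ (1 : Matrix b b ℂ))
        = psdSqrt ρ * (psdSqrt ρ * (((1 : Matrix a a ℂ) - suppProj (ptrB ρ)) ⊗ₖ (1 : Matrix b b ℂ)))
          := by rw [← Matrix.mul_assoc, hsq]
      _ = 0 := by rw [hCz, Matrix.mul_zero]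
  have hQρ : (((1 : Matrix a a ℂ) - suppProj (ptrB ρ)) ⊗ₖ (1 : Matrix b b ℂ)) * ρ = 0 := by
    have h2 := congrArg Matrix.conjTranspose hρQ
    rw [Matrix.conjTranspose_mul, hρ.1.eq, hQherm.eq, Matrix.conjTranspose_zero] at h2
    exact h2
  have hPQ : suppProj (ptrB ρ) ⊗ₖ (1 : Matrix b b ℂ)
      = 1 - ((1 : Matrix a a ℂ) - suppProj (ptrB ρ)) ⊗ₖ (1 : Matrix b b ℂ) := by
    rw [sub_kron, Matrix.one_kronecker_one]
    abel
  rw [hPQ, Matrix.sub_mul, Matrix.one_mul, hQρ, sub_zero, Matrix.mul_sub, Matrix.mul_one,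
    hρQ, sub_zero]

lemma key_psd (hρ : ρ.PosSemidef) (hσ : σ.PosSemidef) {l lam : ℝ}
    (hl : ((ptrB ρ) - (2:ℝ)^l • suppProj (ptrB ρ)).PosSemidef)
    (hlam : ((2:ℝ)^lam • ((1 : Matrix a a ℂ) ⊗ₖ σ) - ρ).PosSemidef) :
    ((2:ℝ)^(lam - l) • ((ptrB ρ) ⊗ₖ σ) - ρ).PosSemidef := by
  have hA : (ptrB ρ).PosSemidef := ptrB_posSemidef hρ
  have h := hA.1
  have hPherm : (suppProj (ptrB ρ)).IsHermitian := suppProj_isHermitian h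
  have hQherm : ((suppProj (ptrB ρ)) ⊗ₖ (1 : Matrix b b ℂ)).IsHermitian :=
    kron_one_isHermitian hPherm
  have hQXQ : ((suppProj (ptrB ρ)) ⊗ₖ (1 : Matrix b b ℂ)) * ((1 : Matrix a a ℂ) ⊗ₖ σ)
        * ((suppProj (ptrB ρ)) ⊗ₖ (1 : Matrix b b ℂ))
      = (suppProj (ptrB ρ)) ⊗ₖ σ := by
    rw [← Matrix.mul_kronecker_mul, ← Matrix.mul_kronecker_mul, Matrix.mul_one,
      Matrix.one_mul, Matrix.mul_one, suppProj_idem h]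
  have step1 : ((2:ℝ)^lam • ((suppProj (ptrB ρ)) ⊗ₖ σ) - ρ).PosSemidef := by
    have h1 := hlam.mul_mul_conjTranspose_same ((suppProj (ptrB ρ)) ⊗ₖ (1 : Matrix b b ℂ))
    rw [hQherm.eq] at h1
    have h2 : ((suppProj (ptrB ρ)) ⊗ₖ (1 : Matrix b b ℂ))
          * ((2:ℝ)^lam • ((1 : Matrix a a ℂ) ⊗ₖ σ) - ρ)
          * ((suppProj (ptrB ρ)) ⊗ₖ (1 : Matrix b b ℂ))
        = (2:ℝ)^lam • ((suppProj (ptrB ρ)) ⊗ₖ σ) - ρ := by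
      rw [Matrix.mul_sub, Matrix.sub_mul, mul_smul_comm, smul_mul_assoc, hQXQ,
        proj_kron_sandwich hρ]
    rwa [h2] at h1
  have step2 : ((2:ℝ)^(lam - l) • ((ptrB ρ) ⊗ₖ σ
      - (2:ℝ)^l • ((suppProj (ptrB ρ)) ⊗ₖ σ))).PosSemidef := by
    refine psd_smul_real ?_ (Real.rpow_nonneg (by norm_num) _)
    have h2 := psd_kron hl hσ
    rwa [sub_kron, Matrix.smul_kronecker] at h2
  have hrw : (2:ℝ)^(lam - l) • ((ptrB ρ) ⊗ₖ σ - (2:ℝ)^l • ((suppProj (ptrB ρ)) ⊗ₖ σ))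
      = (2:ℝ)^(lam - l) • ((ptrB ρ) ⊗ₖ σ) - (2:ℝ)^lam • ((suppProj (ptrB ρ)) ⊗ₖ σ) := by
    rw [smul_sub, smul_smul]
    congr 2
    rw [← Real.rpow_add (by norm_num : (0:ℝ) < 2)]
    congr 1
    ring
  rw [hrw] at step2
  have hadd := step2.add step1
  rwa [sub_add_sub_cancel] at hadd

lemma widen_psd (hρ : Subnormalized ρ) (hσ : σ.PosSemidef) {lam : ℝ}
    (hlam : ((2:ℝ)^lam • ((ptrB ρ) ⊗ₖ σ) - ρ).PosSemidef) :
    ((2:ℝ)^lam • ((1 : Matrix a a ℂ) ⊗ₖ σ) - ρ).PosSemidef := by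
  have hA : (ptrB ρ).PosSemidef := ptrB_posSemidef hρ.1
  have h1 : (((1 : Matrix a a ℂ) - ptrB ρ) ⊗ₖ σ).PosSemidef := by
    refine psd_kron (one_sub_psd hA ?_) hσ
    calc (ptrB ρ).trace.re = ρ.trace.re := by rw [ptrB_trace]
      _ ≤ 1 := hρ.2
  have h2 := psd_smul_real h1 (Real.rpow_nonneg (by norm_num : (0:ℝ) ≤ 2) lam)
  rw [sub_kron, smul_sub] at h2
  have hadd := h2.add hlam
  rwa [sub_add_sub_cancel] at hadd

lemma lam_nonneg (hρ : ρ.PosSemidef) (hρ0 : ρ ≠ 0) (hσ : IsDensity σ) {lam : ℝ}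
    (h : ((2:ℝ)^lam • ((ptrB ρ) ⊗ₖ σ) - ρ).PosSemidef) : 0 ≤ lam := by
  have ht : ((ptrB ρ) ⊗ₖ σ).trace = ρ.trace := by
    rw [Matrix.trace_kronecker, ptrB_trace, hσ.2, mul_one]
  have h1 := psd_trace_re_nonneg h
  rw [Matrix.trace_sub, Matrix.trace_smul, ht, Complex.sub_re, Complex.smul_re,
    smul_eq_mul] at h1
  have htp := trace_re_pos hρ hρ0
  have h2 : (1:ℝ) ≤ (2:ℝ)^lam := by nlinarith
  have h3 : (2:ℝ)^(0:ℝ) ≤ (2:ℝ)^lam := by rwa [Real.rpow_zero]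
  exact (Real.rpow_le_rpow_left_iff one_lt_two).mp h3

lemma real_sInf_univ : sInf (Set.univ : Set ℝ) = 0 := by
  refine Real.sInf_of_not_bddBelow ?_
  rintro ⟨c, hc⟩
  have := hc (Set.mem_univ (c - 1))
  linarith

lemma sInf_eq_zero_of_forall {S : Set ℝ} (h : ∀ x ∈ S, x = 0) : sInf S = 0 := by
  rcases S.eq_empty_or_nonempty with rfl | ⟨x, hx⟩
  · exact Real.sInf_empty
  · have h0 : (0:ℝ) ∈ S := h x hx ▸ hx
    exact le_antisymm (csInf_le ⟨0, fun y hy => (h y hy).ge⟩ h0)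
      (le_csInf ⟨x, hx⟩ fun y hy => (h y hy).symm.le)

lemma dmax_zero_left {m : Type*} [Fintype m] [DecidableEq m] {N : Matrix m m ℂ}
    (hN : N.PosSemidef) : Dmax (0 : Matrix m m ℂ) N = 0 := by
  have hd : Dmax (0 : Matrix m m ℂ) N
      = sInf {l : ℝ | ((2:ℝ)^l • N - 0).PosSemidef} := rfl
  rw [hd]
  have : {l : ℝ | ((2:ℝ)^l • N - 0).PosSemidef} = Set.univ := by
    ext l
    simp only [Set.mem_setOf_eq, Set.mem_univ, iff_true, sub_zero]
    exact psd_smul_real hN (Real.rpow_nonneg (by norm_num) _)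
  rw [this, real_sInf_univ]

end Main

end ImaxProof

/-- Entropy-gap upper bound for the max-information. -/
theorem Imax_le_HR_sub_Hmin {a b : Type*} [Fintype a] [DecidableEq a]
    [Fintype b] [DecidableEq b]
    (ρ : Matrix (a × b) (a × b) ℂ) (hρ : Subnormalized ρ) :
    Imax ρ ≤
      -(sSup {l : ℝ | (ptrB ρ - (2 : ℝ) ^ l • suppProj (ptrB ρ)).PosSemidef})
        - HminCond ρ := by
  classical
  by_cases hρ0 : ρ = 0
  · subst hρ0
    have hptr : ptrB (0 : Matrix (a × b) (a × b) ℂ) = 0 := by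
      ext i j
      simp [ptrB]
    have hL : {l : ℝ | (ptrB (0 : Matrix (a × b) (a × b) ℂ)
        - (2:ℝ)^l • suppProj (ptrB (0 : Matrix (a × b) (a × b) ℂ))).PosSemidef}
        = Set.univ := by
      ext l
      simp only [Set.mem_setOf_eq, Set.mem_univ, iff_true, hptr, ImaxProof.suppProj_zero,
        smul_zero, sub_zero]
      exact Matrix.PosSemidef.zero
    rw [hL, Real.sSup_univ]
    have hIm : Imax (0 : Matrix (a × b) (a × b) ℂ) = 0 := by
      have hIdef : Imax (0 : Matrix (a × b) (a × b) ℂ)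
          = sInf {x : ℝ | ∃ σ : Matrix b b ℂ, IsDensity σ ∧
              x = Dmax (0 : Matrix (a × b) (a × b) ℂ)
                (ptrB (0 : Matrix (a × b) (a × b) ℂ) ⊗ₖ σ)} := rfl
      rw [hIdef]
      refine ImaxProof.sInf_eq_zero_of_forall ?_
      rintro x ⟨σ, hσ, rfl⟩
      rw [hptr, Matrix.zero_kronecker]
      exact ImaxProof.dmax_zero_left Matrix.PosSemidef.zero
    have hHm : HminCond (0 : Matrix (a × b) (a × b) ℂ) = 0 := by
      have hHdef : HminCond (0 : Matrix (a × b) (a × b) ℂ)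
          = - sInf {x : ℝ | ∃ σ : Matrix b b ℂ, IsDensity σ ∧
              x = Dmax (0 : Matrix (a × b) (a × b) ℂ) ((1 : Matrix a a ℂ) ⊗ₖ σ)} := rfl
      rw [hHdef]
      rw [ImaxProof.sInf_eq_zero_of_forall ?_]
      · norm_num
      rintro x ⟨σ, hσ, rfl⟩
      exact ImaxProof.dmax_zero_left (ImaxProof.psd_kron Matrix.PosSemidef.one hσ.1)
    rw [hIm, hHm]
    norm_num
  · have hρpsd := hρ.1
    have htr := hρ.2
    have hb : Nonempty b := by
      by_contra hb
      have hbe : IsEmpty b := not_nonempty_iff.mp hb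
      apply hρ0
      ext p q
      exact (hbe.false p.2).elim
    have hA : (ptrB ρ).PosSemidef := ImaxProof.ptrB_posSemidef hρpsd
    have htp := ImaxProof.trace_re_pos hρpsd hρ0
    have hA0 : ptrB ρ ≠ 0 := by
      intro h0
      have : (ptrB ρ).trace = ρ.trace := ImaxProof.ptrB_trace ρ
      rw [h0, Matrix.trace_zero] at this
      rw [← this] at htp
      simp at htp
    have hAtr : (ptrB ρ).trace.re ≤ 1 := by
      rw [ImaxProof.ptrB_trace]
      exact htr
    have hLne : {l : ℝ | (ptrB ρ - (2:ℝ)^l • suppProj (ptrB ρ)).PosSemidef}.Nonempty :=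
      ImaxProof.exists_mem_suppL hA hA0
    have hLnp : ∀ l ∈ {l : ℝ | (ptrB ρ - (2:ℝ)^l • suppProj (ptrB ρ)).PosSemidef}, l ≤ 0 :=
      fun l hl => ImaxProof.suppL_nonpos hA hA0 hAtr l hl
    have hIdef : Imax ρ = sInf {x : ℝ | ∃ σ : Matrix b b ℂ, IsDensity σ ∧
        x = Dmax ρ (ptrB ρ ⊗ₖ σ)} := rfl
    have hS'lb : ∀ x ∈ {x : ℝ | ∃ σ : Matrix b b ℂ, IsDensity σ ∧
        x = Dmax ρ (ptrB ρ ⊗ₖ σ)}, (0:ℝ) ≤ x := by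
      rintro x ⟨σ, hσ, rfl⟩
      have hDdef : Dmax ρ (ptrB ρ ⊗ₖ σ)
          = sInf {l : ℝ | ((2:ℝ)^l • (ptrB ρ ⊗ₖ σ) - ρ).PosSemidef} := rfl
      rw [hDdef]
      rcases Set.eq_empty_or_nonempty
          {l : ℝ | ((2:ℝ)^l • (ptrB ρ ⊗ₖ σ) - ρ).PosSemidef} with hT | hT
      · rw [hT, Real.sInf_empty]
      · exact le_csInf hT fun lam hlam => ImaxProof.lam_nonneg hρpsd hρ0 hσ hlam
    have hbdd : BddBelow {x : ℝ | ∃ σ : Matrix b b ℂ, IsDensity σ ∧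
        x = Dmax ρ (ptrB ρ ⊗ₖ σ)} := ⟨0, hS'lb⟩
    have perσ : ∀ σ : Matrix b b ℂ, IsDensity σ →
        Imax ρ + sSup {l : ℝ | (ptrB ρ - (2:ℝ)^l • suppProj (ptrB ρ)).PosSemidef}
          ≤ Dmax ρ ((1 : Matrix a a ℂ) ⊗ₖ σ) := by
      intro σ hσ
      have hDdef : Dmax ρ ((1 : Matrix a a ℂ) ⊗ₖ σ)
          = sInf {l : ℝ | ((2:ℝ)^l • ((1 : Matrix a a ℂ) ⊗ₖ σ) - ρ).PosSemidef} := rfl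
      rcases Set.eq_empty_or_nonempty
          {l : ℝ | ((2:ℝ)^l • ((1 : Matrix a a ℂ) ⊗ₖ σ) - ρ).PosSemidef} with hT | hT
      · have hT' : {l : ℝ | ((2:ℝ)^l • (ptrB ρ ⊗ₖ σ) - ρ).PosSemidef} = ∅ := by
          rw [Set.eq_empty_iff_forall_notMem]
          intro lam hlam
          exact Set.eq_empty_iff_forall_notMem.mp hT lam
            (ImaxProof.widen_psd hρ hσ.1 hlam)
        have h0mem : (0:ℝ) ∈ {x : ℝ | ∃ σ : Matrix b b ℂ, IsDensity σ ∧
            x = Dmax ρ (ptrB ρ ⊗ₖ σ)} := by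
          refine ⟨σ, hσ, ?_⟩
          have hDdef2 : Dmax ρ (ptrB ρ ⊗ₖ σ)
              = sInf {l : ℝ | ((2:ℝ)^l • (ptrB ρ ⊗ₖ σ) - ρ).PosSemidef} := rfl
          rw [hDdef2, hT', Real.sInf_empty]
        have hIm : Imax ρ ≤ 0 := by
          rw [hIdef]
          exact csInf_le hbdd h0mem
        have hsup : sSup {l : ℝ | (ptrB ρ - (2:ℝ)^l • suppProj (ptrB ρ)).PosSemidef} ≤ 0 :=
          csSup_le hLne hLnp
        rw [hDdef, hT, Real.sInf_empty]
        linarith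
      · rw [hDdef]
        refine le_csInf hT fun lam hlam => ?_
        have hsup : sSup {l : ℝ | (ptrB ρ - (2:ℝ)^l • suppProj (ptrB ρ)).PosSemidef}
            ≤ lam - Imax ρ := by
          refine csSup_le hLne fun l hl => ?_
          have hkey := ImaxProof.key_psd hρpsd hσ.1 hl hlam
          have hD' : Dmax ρ (ptrB ρ ⊗ₖ σ) ≤ lam - l := by
            have hDdef2 : Dmax ρ (ptrB ρ ⊗ₖ σ)
                = sInf {l : ℝ | ((2:ℝ)^l • (ptrB ρ ⊗ₖ σ) - ρ).PosSemidef} := rfl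
            rw [hDdef2]
            refine csInf_le ⟨0, fun y hy => ImaxProof.lam_nonneg hρpsd hρ0 hσ hy⟩ hkey
          have hIm : Imax ρ ≤ Dmax ρ (ptrB ρ ⊗ₖ σ) := by
            rw [hIdef]
            exact csInf_le hbdd ⟨σ, hσ, rfl⟩
          linarith
        linarith
    have hσ₀ : IsDensity (((Fintype.card b : ℝ)⁻¹) • (1 : Matrix b b ℂ)) := by
      constructor
      · exact ImaxProof.psd_smul_real Matrix.PosSemidef.one (by positivity)
      · rw [Matrix.trace_smul, Matrix.trace_one]
        have hcard : (Fintype.card b : ℝ) ≠ 0 := by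
          exact_mod_cast Fintype.card_ne_zero
        rw [Complex.real_smul]
        push_cast
        field_simp
    have hSne : {x : ℝ | ∃ σ : Matrix b b ℂ, IsDensity σ ∧
        x = Dmax ρ ((1 : Matrix a a ℂ) ⊗ₖ σ)}.Nonempty :=
      ⟨Dmax ρ ((1 : Matrix a a ℂ) ⊗ₖ (((Fintype.card b : ℝ)⁻¹) • (1 : Matrix b b ℂ))),
        _, hσ₀, rfl⟩
    have hfin : Imax ρ + sSup {l : ℝ | (ptrB ρ - (2:ℝ)^l • suppProj (ptrB ρ)).PosSemidef}
        ≤ sInf {x : ℝ | ∃ σ : Matrix b b ℂ, IsDensity σ ∧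
            x = Dmax ρ ((1 : Matrix a a ℂ) ⊗ₖ σ)} := by
      refine le_csInf hSne ?_
      rintro x ⟨σ, hσ, rfl⟩
      exact perσ σ hσ
    have hHdef : HminCond ρ = - sInf {x : ℝ | ∃ σ : Matrix b b ℂ, IsDensity σ ∧
        x = Dmax ρ ((1 : Matrix a a ℂ) ⊗ₖ σ)} := rfl
    rw [hHdef]
    linarith
end
end
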